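/- For every real α, every β > 0 and every x > 0, the function v ↦ (∫_v^∞ u^α·e^{−βu} du)·v^{−α−2}·e^{βv} is Lebesgue integrable on [x, ∞); that is, ∫_x^∞ (∫_v^∞ u^α·e^{−βu} du)·v^{−α−2}·e^{βv} dv < ∞. -/

import Mathlib

open MeasureTheory Set Real

lemma exp_int {b : ℝ} (hb : 0 < b) (v : ℝ) :
    ∫ u in Set.Ioi v, Real.exp (-(b * u)) = b⁻¹ * Real.exp (-(b * v)) := by
  have h := integral_comp_mul_left_Ioi (fun x => Real.exp (-x)) v hb
  simpa [integral_exp_neg_Ioi, integral_exp_Iic, smul_eq_mul] using h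

lemma key_bound (α c : ℝ) (hc : 0 < c) :
    ∃ M : ℝ, 0 < M ∧ ∀ r : ℝ, 1 ≤ r → r ^ α ≤ M * Real.exp (c * (r - 1)) := by
  rcases le_or_gt α 0 with hα | hα
  · refine ⟨1, one_pos, fun r hr => ?_⟩
    have h1 : r ^ α ≤ (1 : ℝ) ^ α := Real.rpow_le_rpow_of_nonpos one_pos hr hα
    have h2 : (1 : ℝ) ≤ Real.exp (c * (r - 1)) := by
      have : (0:ℝ) ≤ c * (r - 1) := by nlinarith
      linarith [Real.add_one_le_exp (c * (r - 1))]
    rw [one_mul]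
    exact (h1.trans_eq (Real.one_rpow α)).trans h2
  · refine ⟨Real.exp c * (α / (c * Real.exp 1)) ^ α, by positivity, fun r hr => ?_⟩
    have hr0 : (0 : ℝ) < r := lt_of_lt_of_le one_pos hr
    have ht : (0 : ℝ) < c * r / α := by positivity
    have h1 := Real.log_le_sub_one_of_pos ht
    rw [Real.log_div (by positivity) hα.ne', Real.log_mul hc.ne' hr0.ne'] at h1
    -- h1 : log c + log r - log α ≤ c * r / α - 1
    have key : r ^ α * Real.exp (-(c * r)) ≤ (α / (c * Real.exp 1)) ^ α := by
      rw [Real.rpow_def_of_pos hr0, Real.rpow_def_of_pos (by positivity), ← Real.exp_add,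
        Real.exp_le_exp, Real.log_div hα.ne' (by positivity), Real.log_mul hc.ne'
        (Real.exp_pos 1).ne', Real.log_exp]
      have h2 := mul_le_mul_of_nonneg_left h1 hα.le
      have h3 : α * (c * r / α - 1) = c * r - α := by field_simp
      nlinarith [h2, h3]
    calc r ^ α = (r ^ α * Real.exp (-(c * r))) * Real.exp (c * r) := by
          rw [mul_assoc, ← Real.exp_add]; simp
      _ ≤ (α / (c * Real.exp 1)) ^ α * Real.exp (c * r) :=
          mul_le_mul_of_nonneg_right key (Real.exp_pos _).le
      _ = Real.exp c * (α / (c * Real.exp 1)) ^ α * Real.exp (c * (r - 1)) := by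
          rw [mul_assoc, mul_comm (Real.exp c), mul_assoc, ← Real.exp_add]; ring_nf

theorem N0_finite (α β x : ℝ) (hβ : 0 < β) (hx : 0 < x) :
    IntegrableOn
      (fun v : ℝ => (∫ u in Set.Ioi v, u ^ α * Real.exp (-β * u)) *
        v ^ (-α - 2) * Real.exp (β * v))
      (Set.Ici x) ∧
    (∫⁻ v in Set.Ici x,
      ENNReal.ofReal ((∫ u in Set.Ioi v, u ^ α * Real.exp (-β * u)) *
        v ^ (-α - 2) * Real.exp (β * v))) < ⊤ := by
  set F : ℝ → ℝ := fun v => ∫ u in Set.Ioi v, u ^ α * Real.exp (-β * u) with hFdef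
  set f : ℝ → ℝ := fun v => F v * v ^ (-α - 2) * Real.exp (β * v) with hfdef
  obtain ⟨M, hM, hMkey⟩ := key_bound α (β * x / 2) (by positivity)
  -- pointwise key bound
  have key : ∀ v u : ℝ, x ≤ v → v ≤ u →
      u ^ α * Real.exp (-β * u) ≤
        (M * v ^ α * Real.exp (-(β / 2) * v)) * Real.exp (-(β / 2) * u) := by
    intro v u hv hu
    have hv0 : (0 : ℝ) < v := hx.trans_le hv
    have hu0 : (0 : ℝ) < u := hv0.trans_le hu
    have hr : (1 : ℝ) ≤ u / v := (one_le_div hv0).mpr hu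
    have h1 : u ^ α ≤ M * v ^ α * Real.exp (β / 2 * (u - v)) := by
      have hsplit : u ^ α = v ^ α * (u / v) ^ α := by
        rw [← Real.mul_rpow hv0.le (by positivity)]
        rw [mul_div_cancel₀ _ hv0.ne']
      rw [hsplit]
      have h2 := hMkey (u / v) hr
      have h3 : Real.exp (β * x / 2 * (u / v - 1)) ≤ Real.exp (β / 2 * (u - v)) := by
        apply Real.exp_le_exp.mpr
        rw [div_sub_one hv0.ne']
        have heq : β * x / 2 * ((u - v) / v) = (β / 2 * (u - v)) * (x / v) := by
          field_simp
        rw [heq]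
        exact mul_le_of_le_one_right (mul_nonneg (by positivity) (sub_nonneg.mpr hu))
          ((div_le_one hv0).mpr hv)
      calc v ^ α * (u / v) ^ α
          ≤ v ^ α * (M * Real.exp (β * x / 2 * (u / v - 1))) :=
            mul_le_mul_of_nonneg_left h2 (Real.rpow_nonneg hv0.le α)
        _ ≤ v ^ α * (M * Real.exp (β / 2 * (u - v))) := by
            exact mul_le_mul_of_nonneg_left
              (mul_le_mul_of_nonneg_left h3 hM.le) (Real.rpow_nonneg hv0.le α)
        _ = M * v ^ α * Real.exp (β / 2 * (u - v)) := by ring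
    calc u ^ α * Real.exp (-β * u)
        ≤ M * v ^ α * Real.exp (β / 2 * (u - v)) * Real.exp (-β * u) :=
          mul_le_mul_of_nonneg_right h1 (Real.exp_pos _).le
      _ = (M * v ^ α * Real.exp (-(β / 2) * v)) * Real.exp (-(β / 2) * u) := by
          rw [mul_assoc, mul_assoc, mul_assoc, ← Real.exp_add, ← Real.exp_add]
          ring_nf
  have hmeas : Measurable fun u : ℝ => u ^ α * Real.exp (-β * u) := by fun_prop
  -- integrability of inner integrand
  have hInt : ∀ v : ℝ, x ≤ v → IntegrableOn (fun u => u ^ α * Real.exp (-β * u)) (Set.Ioi v) := by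
    intro v hv
    have hexp : IntegrableOn (fun u : ℝ => Real.exp (-(β / 2) * u)) (Set.Ioi v) :=
      exp_neg_integrableOn_Ioi v (by positivity)
    refine Integrable.mono' (hexp.const_mul (M * v ^ α * Real.exp (-(β / 2) * v)))
      hmeas.aestronglyMeasurable ?_
    filter_upwards [ae_restrict_mem measurableSet_Ioi] with u hu
    have hu0 : (0 : ℝ) < u := (hx.trans_le hv).trans hu
    rw [Real.norm_eq_abs, abs_of_nonneg (by positivity)]
    exact key v u hv (le_of_lt hu)
  -- F nonneg
  have hFnonneg : ∀ v : ℝ, x ≤ v → 0 ≤ F v := by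
    intro v hv
    refine setIntegral_nonneg measurableSet_Ioi fun u hu => ?_
    have hu0 : (0 : ℝ) < u := (hx.trans_le hv).trans hu
    positivity
  -- F upper bound
  have hFbound : ∀ v : ℝ, x ≤ v → F v ≤ (2 * M / β) * v ^ α * Real.exp (-β * v) := by
    intro v hv
    have hv0 : (0 : ℝ) < v := hx.trans_le hv
    have hexp : IntegrableOn (fun u : ℝ => Real.exp (-(β / 2) * u)) (Set.Ioi v) :=
      exp_neg_integrableOn_Ioi v (by positivity)
    have h1 : F v ≤ ∫ u in Set.Ioi v,
        (M * v ^ α * Real.exp (-(β / 2) * v)) * Real.exp (-(β / 2) * u) := by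
      refine setIntegral_mono_on (hInt v hv)
        (hexp.const_mul _) measurableSet_Ioi fun u hu => key v u hv (le_of_lt hu)
    have h2 : ∫ u in Set.Ioi v,
        (M * v ^ α * Real.exp (-(β / 2) * v)) * Real.exp (-(β / 2) * u)
        = (M * v ^ α * Real.exp (-(β / 2) * v)) * ((β / 2)⁻¹ * Real.exp (-(β / 2 * v))) := by
      rw [MeasureTheory.integral_const_mul]
      congr 1
      simpa [neg_mul] using exp_int (b := β / 2) (by positivity) v
    refine h1.trans_eq ?_
    have hexp2 : Real.exp (-(β / 2) * v) * Real.exp (-(β / 2 * v)) = Real.exp (-β * v) := by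
      rw [← Real.exp_add]; congr 1; ring
    rw [h2, show M * v ^ α * Real.exp (-(β / 2) * v) * ((β / 2)⁻¹ * Real.exp (-(β / 2 * v)))
      = (β / 2)⁻¹ * M * v ^ α * (Real.exp (-(β / 2) * v) * Real.exp (-(β / 2 * v))) by ring,
      hexp2, show (β / 2)⁻¹ = 2 / β by rw [inv_div]]
    ring
  -- measurability of f on Ici x
  have hFanti : AntitoneOn F (Set.Ici x) := by
    intro v1 h1 v2 h2 h12
    refine setIntegral_mono_set (hInt v1 h1) ?_ (HasSubset.Subset.eventuallyLE (Set.Ioi_subset_Ioi h12))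
    filter_upwards [ae_restrict_mem measurableSet_Ioi] with u hu
    have hu0 : (0 : ℝ) < u := (hx.trans_le h1).trans hu
    positivity
  have hfmeas : AEStronglyMeasurable f ((volume : Measure ℝ).restrict (Set.Ici x)) := by
    have h1 : AEMeasurable F ((volume : Measure ℝ).restrict (Set.Ici x)) :=
      aemeasurable_restrict_of_antitoneOn measurableSet_Ici hFanti
    exact ((h1.mul (by fun_prop : Measurable fun v : ℝ => v ^ (-α - 2)).aemeasurable).mul
      (by fun_prop : Measurable fun v : ℝ => Real.exp (β * v)).aemeasurable).aestronglyMeasurable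
  -- dominating function
  have hgInt : IntegrableOn (fun v : ℝ => (2 * M / β) * v ^ (-2 : ℝ)) (Set.Ici x) := by
    exact (Iff.mpr integrableOn_Ici_iff_integrableOn_Ioi
      (integrableOn_Ioi_rpow_of_lt (by norm_num) hx)).const_mul _
  have hbound : ∀ v ∈ Set.Ici x, ‖f v‖ ≤ (2 * M / β) * v ^ (-2 : ℝ) := by
    intro v hv
    have hv0 : (0 : ℝ) < v := hx.trans_le hv
    have hnn : 0 ≤ f v := by
      have := hFnonneg v hv
      have h2 : (0:ℝ) ≤ v ^ (-α - 2) := Real.rpow_nonneg hv0.le _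
      positivity
    rw [Real.norm_eq_abs, abs_of_nonneg hnn]
    have h1 : f v ≤ ((2 * M / β) * v ^ α * Real.exp (-β * v)) * v ^ (-α - 2) * Real.exp (β * v) := by
      refine mul_le_mul_of_nonneg_right (mul_le_mul_of_nonneg_right (hFbound v hv)
        (Real.rpow_nonneg hv0.le _)) (Real.exp_pos _).le
    refine h1.trans_eq ?_
    rw [show ((2 * M / β) * v ^ α * Real.exp (-β * v)) * v ^ (-α - 2) * Real.exp (β * v)
        = (2 * M / β) * (v ^ α * v ^ (-α - 2)) * (Real.exp (-β * v) * Real.exp (β * v)) by ring]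
    rw [← Real.rpow_add hv0, ← Real.exp_add,
      show α + (-α - 2) = (-2 : ℝ) by ring, show -β * v + β * v = 0 by ring,
      Real.exp_zero, mul_one]
  have hint : IntegrableOn f (Set.Ici x) := by
    refine Integrable.mono' hgInt hfmeas ?_
    filter_upwards [ae_restrict_mem measurableSet_Ici] with v hv using hbound v hv
  refine ⟨hint, ?_⟩
  refine lt_of_le_of_lt (lintegral_mono fun v => ?_) hint.hasFiniteIntegral
  rw [← ofReal_norm_eq_enorm]
  exact ENNReal.ofReal_le_ofReal (le_abs_self _)
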